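/- Let G_1,…,G_n be connected graphs with λ_1,…,λ_n vertices respectively, and let G be the graph obtained by joining each vertex v_i of the complete graph K_n (on vertex set {v_1,…,v_n}) by an edge to an arbitrarily chosen vertex u_i of G_i. If G has a connected partition of type μ, then the complete sun graph S̄(n; λ_1,…,λ_n) also has a connected partition of type μ. -/

import Mathlib

noncomputable section

open SimpleGraph

/-- The chromatic symmetric function of a finite simple graph, as a formal power
series in countably many commuting variables `x_0, x_1, x_2, …`: the coefficient of the
monomial `∏ i, x_i ^ d i` is the number of proper colourings `κ : V → ℕ` in which colour `i`
is used exactly `d i` times. -/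
def csf {V : Type} [Fintype V] (G : SimpleGraph V) : MvPowerSeries ℕ ℚ :=
  fun d => (Nat.card {κ : V → ℕ //
      (∀ u v : V, G.Adj u v → κ u ≠ κ v) ∧
      ∀ i : ℕ, Nat.card {v : V // κ v = i} = d i} : ℚ)

/-- The elementary symmetric function `e_k` as a formal power series. -/
def esym (k : ℕ) : MvPowerSeries ℕ ℚ :=
  fun d => if (∀ i ∈ d.support, d i = 1) ∧ (d.sum fun _ v => v) = k then 1 else 0

/-- `e_λ` for a partition `λ` given as a multiset of parts. -/
def esymM (μ : Multiset ℕ) : MvPowerSeries ℕ ℚ :=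
  (μ.map esym).prod

/-- A symmetric function is `e`-positive if it is a finite nonnegative linear combination
of the elementary symmetric functions `e_λ`, `λ` a partition (all parts positive). -/
def EPositive (f : MvPowerSeries ℕ ℚ) : Prop :=
  ∃ c : Multiset ℕ →₀ ℚ, (∀ μ, 0 ≤ c μ) ∧ (∀ μ ∈ c.support, 0 ∉ μ) ∧
    f = c.sum fun μ a => a • esymM μ

/-- The path `P_k` on `k` vertices. -/
def pathG (k : ℕ) : SimpleGraph (Fin k) :=
  SimpleGraph.fromRel (fun i j => (j : ℕ) = (i : ℕ) + 1)

/-- The cycle `C_m` on `m` vertices (for `m = 2` this is a single edge, i.e. `P_2`). -/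
def cycleG (m : ℕ) : SimpleGraph (Fin m) :=
  SimpleGraph.fromRel (fun i j => (j : ℕ) = ((i : ℕ) + 1) % m)

/-- Auxiliary relation for sun graphs: body relation on `Fin n`, plus rays
`P_{lam i}` attached at vertex `i`, the leaf `⟨i,0⟩` of ray `i` being joined to `i`. -/
def sunRel (n : ℕ) (lam : Fin n → ℕ) (body : Fin n → Fin n → Prop) :
    (Fin n ⊕ ((i : Fin n) × Fin (lam i))) → (Fin n ⊕ ((i : Fin n) × Fin (lam i))) → Prop
  | Sum.inl i, Sum.inl i' => body i i'
  | Sum.inl i, Sum.inr p => p.1 = i ∧ (p.2 : ℕ) = 0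
  | Sum.inr p, Sum.inr q => p.1 = q.1 ∧ (q.2 : ℕ) = (p.2 : ℕ) + 1
  | _, _ => False

/-- The sun graph `S(n; λ_1, …, λ_n)`: a cycle `C_n` with a path `P_{λ_i}` (a *ray*)
joined by an edge to the `i`-th cycle vertex, for each `i`. -/
def sunGraph (n : ℕ) (lam : Fin n → ℕ) :
    SimpleGraph (Fin n ⊕ ((i : Fin n) × Fin (lam i))) :=
  SimpleGraph.fromRel (sunRel n lam (fun i i' => (i' : ℕ) = ((i : ℕ) + 1) % n))

/-- The complete sun graph `S̄(n; λ_1, …, λ_n)`: as `sunGraph`, but with complete body `K_n`. -/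
def completeSunGraph (n : ℕ) (lam : Fin n → ℕ) :
    SimpleGraph (Fin n ⊕ ((i : Fin n) × Fin (lam i))) :=
  SimpleGraph.fromRel (sunRel n lam (fun i i' => i ≠ i'))

/-- The spider `S(μ_1, …, μ_d)`: `d` paths (legs) `P_{μ_i}`, each joined at a leaf to a
common centre vertex. -/
def spiderGraph (d : ℕ) (mu : Fin d → ℕ) :
    SimpleGraph (Unit ⊕ ((i : Fin d) × Fin (mu i))) :=
  SimpleGraph.fromRel (fun a b => match a, b with
    | Sum.inl _, Sum.inr p => (p.2 : ℕ) = 0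
    | Sum.inr p, Sum.inr q => p.1 = q.1 ∧ (q.2 : ℕ) = (p.2 : ℕ) + 1
    | _, _ => False)

/-- The graph obtained from a body graph `H` on `Fin n` by joining each body vertex `i`
by an edge to a chosen vertex `u i` of a graph `Gs i`. -/
def attachGraph {n : ℕ} {Vs : Fin n → Type} (H : SimpleGraph (Fin n))
    (Gs : ∀ i, SimpleGraph (Vs i)) (u : ∀ i, Vs i) :
    SimpleGraph (Fin n ⊕ ((i : Fin n) × Vs i)) :=
  SimpleGraph.fromRel (fun a b => match a, b with
    | Sum.inl i, Sum.inl i' => H.Adj i i'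
    | Sum.inl i, Sum.inr p => p.1 = i ∧ p.2 = u p.1
    | Sum.inr p, Sum.inr q => ∃ h : p.1 = q.1, (Gs q.1).Adj (h ▸ p.2) q.2
    | _, _ => False)

/-- `G` has a connected partition of type `μ`: a partition of the vertex set all of whose
blocks induce connected subgraphs, the multiset of block sizes being `μ`. -/
def HasConnectedPartition {V : Type} [Fintype V] [DecidableEq V]
    (G : SimpleGraph V) (μ : Multiset ℕ) : Prop :=
  ∃ P : Finpartition (Finset.univ : Finset V),
    (∀ p ∈ P.parts, (G.induce (↑p : Set V)).Connected) ∧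
      P.parts.val.map Finset.card = μ

/-- `G` has a perfect matching: a partition of `V(G)` into pairs of adjacent vertices. -/
def HasPerfectMatching {V : Type} (G : SimpleGraph V) : Prop :=
  ∃ M : G.Subgraph, M.IsPerfectMatching

/-- `G` has an almost perfect matching: a partition of `V(G)` into pairs of adjacent
vertices together with one singleton. -/
def HasAlmostPerfectMatching {V : Type} (G : SimpleGraph V) : Prop :=
  ∃ M : G.Subgraph, M.IsMatching ∧ ∃ v : V, M.verts = {v}ᶜ

/-- The tadpole graph `T_{m,l}`: the cycle `C_m` (vertices `0, …, m-1`, consecutive edges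
plus the chord `{0, m-1}`) with a path on `l` further vertices attached by an edge at
vertex `m-1`.  For `l = 0` this is just `C_m`. -/
def tadpole (m l : ℕ) : SimpleGraph (Fin (m + l)) :=
  SimpleGraph.fromRel (fun i j =>
    (j : ℕ) = (i : ℕ) + 1 ∨ ((i : ℕ) = 0 ∧ (j : ℕ) = m - 1))

/-- Dumbbell with path-parameter `t = l + 1 ≥ 0`: vertices `0, …, m-1` form the cycle `C_m`
(consecutive edges plus chord `{0, m-1}`), vertices `m+t-1, …, m+n+t-2` form the cycle `C_n`
(consecutive edges plus chord `{m+t-1, m+n+t-2}`), and the vertices in between form the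
connecting path; for `t = 0` (i.e. `l = -1`) the two cycles share the vertex `m-1`. -/
def dumbbellAux (m n t : ℕ) : SimpleGraph (Fin (m + n + t - 1)) :=
  SimpleGraph.fromRel (fun i j =>
    (j : ℕ) = (i : ℕ) + 1
      ∨ ((i : ℕ) = 0 ∧ (j : ℕ) = m - 1)
      ∨ ((i : ℕ) = m + t - 1 ∧ (j : ℕ) = m + n + t - 2))

/-- The dumbbell graph `D(m, l, n)` for `l ≥ -1`: cycles `C_m` and `C_n` joined by a path
on `l` vertices (for `l = 1` a single joining vertex, for `l = 0` a joining edge, and for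
`l = -1` the two cycles share a vertex). -/
def dumbbell (m n : ℕ) (l : ℤ) : SimpleGraph (Fin (m + n + (l + 1).toNat - 1)) :=
  dumbbellAux m n (l + 1).toNat

end

section AuxCP
open SimpleGraph


lemma exists_sorted_equiv {α : Type} [Fintype α] {k : ℕ} (hk : Fintype.card α = k)
    (r : α → ℕ) : ∃ e : α ≃ Fin k, ∀ a b : Fin k, a ≤ b → r (e.symm a) ≤ r (e.symm b) := by
  classical
  let enc := Fintype.equivFin α
  let key : α → ℕ ×ₗ ℕ := fun v => toLex (r v, (enc v : ℕ))
  have hinj : Function.Injective key := by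
    intro x y hxy
    have h2 : ((enc x : ℕ)) = (enc y : ℕ) := congrArg (fun p => (ofLex p).2) hxy
    exact enc.injective (Fin.val_injective h2)
  letI : LinearOrder α := LinearOrder.lift' key hinj
  refine ⟨(monoEquivOfFin α hk).symm.toEquiv, fun a b hab => ?_⟩
  have h1 : (monoEquivOfFin α hk) a ≤ (monoEquivOfFin α hk) b :=
    (monoEquivOfFin α hk).monotone hab
  have h2 : key ((monoEquivOfFin α hk) a) ≤ key ((monoEquivOfFin α hk) b) := h1
  have h3 := Prod.Lex.monotone_fst _ _ h2
  simpa [key] using h3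

lemma walk_cross {V : Type} {G : SimpleGraph V} {s : Set V} (Q : V → Prop)
    {x y : ↑s} (p : (G.induce s).Walk x y) :
    Q x.val → ¬ Q y.val → ∃ a b : ↑s, (G.induce s).Adj a b ∧ Q a.val ∧ ¬ Q b.val := by
  induction p with
  | nil => intro hx hy; exact absurd hx hy
  | @cons a c b h p ih =>
    intro hx hy
    by_cases hz : Q c.val
    · exact ih hz hy
    · exact ⟨a, c, h, hx, hz⟩

lemma attach_escape {n : ℕ} {Vs : Fin n → Type} {H : SimpleGraph (Fin n)}
    (Gs : ∀ i, SimpleGraph (Vs i)) (u : ∀ i, Vs i)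
    {s : Set (Fin n ⊕ ((i : Fin n) × Vs i))}
    (hconn : ((attachGraph H Gs u).induce s).Connected)
    (i : Fin n) (v : Vs i) (hv : Sum.inr ⟨i, v⟩ ∈ s)
    (y : Fin n ⊕ ((i : Fin n) × Vs i)) (hy : y ∈ s)
    (hyi : ¬ ∃ w : Vs i, y = Sum.inr ⟨i, w⟩) :
    Sum.inl i ∈ s ∧ Sum.inr ⟨i, u i⟩ ∈ s := by
  obtain ⟨p⟩ := hconn.preconnected ⟨_, hv⟩ ⟨y, hy⟩
  obtain ⟨a, b, hab, ha, hb⟩ :=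
    walk_cross (fun x => ∃ w : Vs i, x = Sum.inr ⟨i, w⟩) p ⟨v, rfl⟩ hyi
  obtain ⟨w, hw⟩ := ha
  have hadj : (attachGraph H Gs u).Adj a.val b.val := hab
  rw [attachGraph, SimpleGraph.fromRel_adj] at hadj
  obtain ⟨bv, hbs⟩ := b
  obtain ⟨hne, hrel | hrel⟩ := hadj
  · rw [hw] at hrel
    cases bv with
    | inl j => exact hrel.elim
    | inr q =>
        obtain ⟨h1, -⟩ := hrel
        exact absurd (by cases q with | mk q1 q2 => cases h1; exact ⟨q2, rfl⟩) hb
  · rw [hw] at hrel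
    cases bv with
    | inl j =>
        obtain ⟨h1, h2⟩ := hrel
        have h1' : i = j := h1
        have h2' : w = u i := h2
        subst h1'; subst h2'
        exact ⟨hbs, hw ▸ a.2⟩
    | inr q =>
        obtain ⟨h1, -⟩ := hrel
        exact absurd (by cases q with | mk q1 q2 => cases h1.symm; exact ⟨q2, rfl⟩) hb

lemma sun_adj_body {n : ℕ} {lam : Fin n → ℕ} {j j' : Fin n} (h : j ≠ j') :
    (completeSunGraph n lam).Adj (Sum.inl j) (Sum.inl j') := by
  rw [completeSunGraph, SimpleGraph.fromRel_adj]
  exact ⟨by simp [h], Or.inl h⟩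

lemma sun_adj_leaf {n : ℕ} {lam : Fin n → ℕ} {j : Fin n} {b : Fin (lam j)} (h : (b : ℕ) = 0) :
    (completeSunGraph n lam).Adj (Sum.inl j) (Sum.inr ⟨j, b⟩) := by
  rw [completeSunGraph, SimpleGraph.fromRel_adj]
  exact ⟨by simp, Or.inl ⟨rfl, h⟩⟩

lemma sun_adj_ray {n : ℕ} {lam : Fin n → ℕ} {j : Fin n} {b b' : Fin (lam j)}
    (h : (b' : ℕ) = (b : ℕ) + 1) :
    (completeSunGraph n lam).Adj (Sum.inr ⟨j, b⟩) (Sum.inr ⟨j, b'⟩) := by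
  rw [completeSunGraph, SimpleGraph.fromRel_adj]
  refine ⟨?_, Or.inl ⟨rfl, h⟩⟩
  simp only [ne_eq, Sum.inr.injEq]
  intro hq
  have : (b : ℕ) = (b' : ℕ) := by
    cases hq; rfl
  omega

lemma sun_star_connected (n : ℕ) (lam : Fin n → ℕ)
    (s : Set (Fin n ⊕ ((i : Fin n) × Fin (lam i))))
    (i0 : Fin n) (h0 : Sum.inl i0 ∈ s)
    (hbody : ∀ (j : Fin n) (b : Fin (lam j)), Sum.inr ⟨j, b⟩ ∈ s → Sum.inl j ∈ s)
    (hdown : ∀ (j : Fin n) (b : Fin (lam j)), Sum.inr ⟨j, b⟩ ∈ s →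
        ∀ b' : Fin (lam j), b' ≤ b → Sum.inr ⟨j, b'⟩ ∈ s) :
    ((completeSunGraph n lam).induce s).Connected := by
  have hbase : ∀ (j : Fin n) (hj : Sum.inl j ∈ s),
      ((completeSunGraph n lam).induce s).Reachable ⟨_, hj⟩ ⟨_, h0⟩ := by
    intro j hj
    by_cases hji : j = i0
    · subst hji; rfl
    · exact SimpleGraph.Adj.reachable (by exact sun_adj_body hji)
  have hray : ∀ (j : Fin n) (k : ℕ) (b : Fin (lam j)) (hbk : (b : ℕ) = k)
      (hb : Sum.inr ⟨j, b⟩ ∈ s),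
      ((completeSunGraph n lam).induce s).Reachable ⟨_, hb⟩ ⟨_, hbody j b hb⟩ := by
    intro j k
    induction k with
    | zero =>
      intro b hbk hb
      exact SimpleGraph.Adj.reachable (by exact (sun_adj_leaf hbk).symm)
    | succ k ih =>
      intro b hbk hb
      have hk : k < lam j := by omega
      have hb' : Sum.inr ⟨j, (⟨k, hk⟩ : Fin (lam j))⟩ ∈ s :=
        hdown j b hb ⟨k, hk⟩ (by simp [Fin.le_def]; omega)
      refine SimpleGraph.Reachable.trans ?_ ((ih ⟨k, hk⟩ rfl hb').trans ?_)
      · exact SimpleGraph.Adj.reachable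
          (by exact (sun_adj_ray (b := ⟨k, hk⟩) (by simpa using hbk)).symm)
      · rfl
  rw [SimpleGraph.connected_iff_exists_forall_reachable]
  refine ⟨⟨_, h0⟩, ?_⟩
  rintro ⟨z, hz⟩
  have key : ∀ (z : Fin n ⊕ ((i : Fin n) × Fin (lam i))) (hz : z ∈ s),
      ((completeSunGraph n lam).induce s).Reachable ⟨z, hz⟩ ⟨_, h0⟩ := by
    rintro (j | ⟨j, b⟩) hz
    · exact hbase j hz
    · exact (hray j b b rfl hz).trans (hbase j _)
  exact (key z hz).symm

lemma sun_ray_connected (n : ℕ) (lam : Fin n → ℕ) (i : Fin n)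
    (s : Set (Fin n ⊕ ((j : Fin n) × Fin (lam j)))) (m : Fin (lam i))
    (hm : Sum.inr ⟨i, m⟩ ∈ s)
    (hsub : ∀ x ∈ s, ∃ b : Fin (lam i), x = Sum.inr ⟨i, b⟩)
    (hmin : ∀ b : Fin (lam i), Sum.inr ⟨i, b⟩ ∈ s → m ≤ b)
    (hconv : ∀ b : Fin (lam i), Sum.inr ⟨i, b⟩ ∈ s →
        ∀ d : Fin (lam i), m ≤ d → d ≤ b → Sum.inr ⟨i, d⟩ ∈ s) :
    ((completeSunGraph n lam).induce s).Connected := by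
  have hray : ∀ (k : ℕ) (b : Fin (lam i)) (hbk : (b : ℕ) = (m : ℕ) + k)
      (hb : Sum.inr ⟨i, b⟩ ∈ s),
      ((completeSunGraph n lam).induce s).Reachable ⟨_, hb⟩ ⟨_, hm⟩ := by
    intro k
    induction k with
    | zero =>
      intro b hbk hb
      have : b = m := Fin.ext (by omega)
      subst this; rfl
    | succ k ih =>
      intro b hbk hb
      have hk : (m : ℕ) + k < lam i := by omega
      have hd : Sum.inr ⟨i, (⟨(m : ℕ) + k, hk⟩ : Fin (lam i))⟩ ∈ s :=
        hconv b hb ⟨(m : ℕ) + k, hk⟩ (by simp [Fin.le_def]) (by simp [Fin.le_def]; omega)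
      refine SimpleGraph.Reachable.trans ?_ (ih ⟨(m : ℕ) + k, hk⟩ rfl hd)
      exact SimpleGraph.Adj.reachable
        (by exact (sun_adj_ray (b := ⟨(m : ℕ) + k, hk⟩) (by show (b : ℕ) = (m : ℕ) + k + 1; omega)).symm)
  rw [SimpleGraph.connected_iff_exists_forall_reachable]
  refine ⟨⟨_, hm⟩, ?_⟩
  rintro ⟨z, hz⟩
  obtain ⟨b, rfl⟩ := hsub z hz
  have hmb := hmin b hz
  exact (hray ((b : ℕ) - (m : ℕ)) b (by have := Fin.le_def.mp hmb; omega) hz).symm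


lemma finpartition_map_equiv {α β : Type} [Fintype α] [Fintype β] [DecidableEq α] [DecidableEq β]
    (e : α ≃ β) (P : Finpartition (Finset.univ : Finset α)) :
    ∃ Q : Finpartition (Finset.univ : Finset β),
      Q.parts = P.parts.map ⟨Finset.map e.toEmbedding, Finset.map_injective _⟩ := by
  refine ⟨⟨P.parts.map ⟨Finset.map e.toEmbedding, Finset.map_injective _⟩, ?_, ?_, ?_⟩, rfl⟩
  · rw [Finset.supIndep_iff_pairwiseDisjoint]
    intro p hp q hq hpq
    simp only [Finset.mem_coe, Finset.mem_map, Function.Embedding.coeFn_mk] at hp hq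
    obtain ⟨p', hp', rfl⟩ := hp
    obtain ⟨q', hq', rfl⟩ := hq
    have hne : p' ≠ q' := fun h => hpq (by rw [h])
    have hd : Disjoint p' q' := P.disjoint hp' hq' hne
    exact Function.onFun_apply .. ▸ ((Finset.disjoint_map e.toEmbedding).mpr hd)
  · ext x
    simp only [Finset.mem_sup, Finset.mem_map, Function.Embedding.coeFn_mk, Finset.mem_univ,
      iff_true, id]
    have hx : e.symm x ∈ P.parts.sup id := by rw [P.sup_parts]; exact Finset.mem_univ _
    obtain ⟨p, hp, hxp⟩ := Finset.mem_sup.mp hx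
    exact ⟨_, ⟨p, hp, rfl⟩, Finset.mem_map_equiv.mpr hxp⟩
  · intro hbot
    simp only [Finset.bot_eq_empty, Finset.mem_map, Function.Embedding.coeFn_mk] at hbot
    obtain ⟨p, hp, hpe⟩ := hbot
    rw [Finset.map_eq_empty] at hpe
    subst hpe; exact P.bot_notMem hp

end AuxCP

/-- If `G` is obtained by joining each vertex `v_i` of the complete graph
`K_n` by an edge to a chosen vertex `u_i` of a connected graph `G_i` on `λ_i` vertices,
and `G` has a connected partition of type `μ`, then so does the complete sun
`S̄(n; λ_1, …, λ_n)`. -/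
theorem completeSun_connectedPartition_of_attach_complete (n : ℕ) (hn : 3 ≤ n)
    (lam : Fin n → ℕ) (hpos : ∀ i, 0 < lam i)
    (Vs : Fin n → Type) [∀ i, Fintype (Vs i)] [∀ i, DecidableEq (Vs i)]
    (Gs : ∀ i, SimpleGraph (Vs i)) (hconn : ∀ i, (Gs i).Connected)
    (hcard : ∀ i, Fintype.card (Vs i) = lam i)
    (u : ∀ i, Vs i) (μ : Multiset ℕ)
    (h : HasConnectedPartition (attachGraph (⊤ : SimpleGraph (Fin n)) Gs u) μ) :
    HasConnectedPartition (completeSunGraph n lam) μ := by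
  classical
  obtain ⟨P, hPc, hPt⟩ := h
  let pt : ∀ i : Fin n, Vs i → Finset (Fin n ⊕ ((i : Fin n) × Vs i)) :=
    fun i v => P.part (Sum.inr ⟨i, v⟩)
  let encF : Finset (Fin n ⊕ ((i : Fin n) × Vs i)) → ℕ :=
    fun t => (Fintype.equivFin (Finset (Fin n ⊕ ((i : Fin n) × Vs i))) t : ℕ)
  have hencF : Function.Injective encF := fun a b hab =>
    (Fintype.equivFin _).injective (Fin.val_injective hab)
  let rk : ∀ i : Fin n, Vs i → ℕ := fun i v =>
    if pt i v = pt i (u i) then 0 else encF (pt i v) + 1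
  have hrk_part : ∀ i v w, pt i v = pt i w → rk i v = rk i w := by
    intro i v w hvw; simp only [rk, hvw]
  have hrk : ∀ i v w, rk i v = rk i w → pt i v = pt i w := by
    intro i v w hvw
    by_cases h1 : pt i v = pt i (u i) <;> by_cases h2 : pt i w = pt i (u i)
    · rw [h1, h2]
    · simp only [rk, if_pos h1, if_neg h2] at hvw; omega
    · simp only [rk, if_neg h1, if_pos h2] at hvw; omega
    · simp only [rk, if_neg h1, if_neg h2] at hvw
      exact hencF (by omega)
  have hrk_u : ∀ i, rk i (u i) = 0 := by intro i; simp [rk]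
  choose e he using fun i => exists_sorted_equiv (hcard i) (rk i)
  let g : (Fin n ⊕ ((i : Fin n) × Vs i)) ≃ (Fin n ⊕ ((i : Fin n) × Fin (lam i))) :=
    Equiv.sumCongr (Equiv.refl _) (Equiv.sigmaCongrRight fun i => e i)
  have hg_symm_inl : ∀ j, g.symm (Sum.inl j) = Sum.inl j := fun j => rfl
  have hg_symm_inr : ∀ (j) (b : Fin (lam j)),
      g.symm (Sum.inr ⟨j, b⟩) = Sum.inr ⟨j, (e j).symm b⟩ := fun j b => rfl
  obtain ⟨Q, hQ⟩ := finpartition_map_equiv g P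
  refine ⟨Q, ?_, ?_⟩
  · intro q hq
    rw [hQ] at hq
    simp only [Finset.mem_map, Function.Embedding.coeFn_mk] at hq
    obtain ⟨B, hB, rfl⟩ := hq
    have hBconn := hPc B hB
    have hmem : ∀ x, x ∈ B.map g.toEmbedding ↔ g.symm x ∈ B :=
      fun x => Finset.mem_map_equiv
    have hconvex : ∀ (j : Fin n) (a c : Fin (lam j)),
        Sum.inr ⟨j, a⟩ ∈ B.map g.toEmbedding →
        Sum.inr ⟨j, c⟩ ∈ B.map g.toEmbedding →
        ∀ d, a ≤ d → d ≤ c → Sum.inr ⟨j, d⟩ ∈ B.map g.toEmbedding := by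
      intro j a c ha hc d had hdc
      rw [hmem, hg_symm_inr] at ha hc ⊢
      have hpa : pt j ((e j).symm a) = B := P.part_eq_of_mem hB ha
      have hpc : pt j ((e j).symm c) = B := P.part_eq_of_mem hB hc
      have h1 : rk j ((e j).symm a) ≤ rk j ((e j).symm d) := he j a d had
      have h2 : rk j ((e j).symm d) ≤ rk j ((e j).symm c) := he j d c hdc
      have h3 : rk j ((e j).symm a) = rk j ((e j).symm c) :=
        hrk_part j _ _ (hpa.trans hpc.symm)
      have h4 : rk j ((e j).symm d) = rk j ((e j).symm a) := by omega
      have h5 : pt j ((e j).symm d) = B := (hrk j _ _ h4).trans hpa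
      rw [← h5]
      exact P.mem_part (Finset.mem_univ _)
    by_cases hbody : ∃ i0, Sum.inl i0 ∈ B
    · obtain ⟨i0, hi0⟩ := hbody
      have hescape : ∀ (j : Fin n) (w : Vs j), Sum.inr ⟨j, w⟩ ∈ B →
          Sum.inl j ∈ B ∧ Sum.inr ⟨j, u j⟩ ∈ B := by
        intro j w hw
        have hres := attach_escape Gs u hBconn j w (Finset.mem_coe.mpr hw) (Sum.inl i0)
          (Finset.mem_coe.mpr hi0) (by rintro ⟨w', hw'⟩; cases hw')
        exact ⟨Finset.mem_coe.mp hres.1, Finset.mem_coe.mp hres.2⟩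
      apply sun_star_connected n lam _ i0
      · exact Finset.mem_coe.mpr ((hmem _).mpr (by rw [hg_symm_inl]; exact hi0))
      · intro j b hb
        have hb' : Sum.inr ⟨j, (e j).symm b⟩ ∈ B := by
          have := (hmem _).mp (Finset.mem_coe.mp hb); rwa [hg_symm_inr] at this
        refine Finset.mem_coe.mpr ((hmem _).mpr ?_)
        rw [hg_symm_inl]
        exact (hescape j _ hb').1
      · intro j b hb b' hb'
        have hbB : Sum.inr ⟨j, b⟩ ∈ B.map g.toEmbedding := Finset.mem_coe.mp hb
        have hbB' : Sum.inr ⟨j, (e j).symm b⟩ ∈ B := by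
          have := (hmem _).mp hbB; rwa [hg_symm_inr] at this
        have huj : Sum.inr ⟨j, u j⟩ ∈ B := (hescape j _ hbB').2
        have hptu : pt j (u j) = B := P.part_eq_of_mem hB huj
        have hzero : Sum.inr ⟨j, (⟨0, hpos j⟩ : Fin (lam j))⟩ ∈ B.map g.toEmbedding := by
          rw [hmem, hg_symm_inr]
          have h1 : rk j ((e j).symm ⟨0, hpos j⟩) ≤ rk j ((e j).symm (e j (u j))) :=
            he j _ _ (by simp [Fin.le_def])
          rw [Equiv.symm_apply_apply] at h1
          have h2 : rk j ((e j).symm ⟨0, hpos j⟩) = rk j (u j) := by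
            have := hrk_u j; omega
          have h3 : pt j ((e j).symm ⟨0, hpos j⟩) = B := (hrk j _ _ h2).trans hptu
          rw [← h3]
          exact P.mem_part (Finset.mem_univ _)
        exact Finset.mem_coe.mpr
          (hconvex j ⟨0, hpos j⟩ b hzero hbB b' (by simp [Fin.le_def]) hb')
    · obtain ⟨x, hx⟩ := P.nonempty_of_mem_parts hB
      obtain (j | ⟨i, v⟩) := x
      · exact absurd ⟨j, hx⟩ hbody
      · have hallray : ∀ y ∈ B, ∃ w : Vs i, y = Sum.inr ⟨i, w⟩ := by
          intro y hy
          by_contra hyn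
          exact hbody ⟨i, Finset.mem_coe.mp
            (attach_escape Gs u hBconn i v (Finset.mem_coe.mpr hx) y
              (Finset.mem_coe.mpr hy) hyn).1⟩
        have hsub : ∀ x ∈ (↑(B.map g.toEmbedding) :
            Set (Fin n ⊕ ((j : Fin n) × Fin (lam j)))),
            ∃ b : Fin (lam i), x = Sum.inr ⟨i, b⟩ := by
          intro x hxq
          obtain ⟨w, hw⟩ := hallray _ ((hmem _).mp (Finset.mem_coe.mp hxq))
          refine ⟨e i w, ?_⟩
          have h := congrArg g hw
          rwa [Equiv.apply_symm_apply] at h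
        have hTmem : Sum.inr ⟨i, e i v⟩ ∈ B.map g.toEmbedding := by
          rw [hmem, hg_symm_inr, Equiv.symm_apply_apply]
          exact hx
        let T : Finset (Fin (lam i)) :=
          Finset.univ.filter (fun b : Fin (lam i) => Sum.inr ⟨i, b⟩ ∈ B.map g.toEmbedding)
        have hTne : T.Nonempty :=
          ⟨e i v, Finset.mem_filter.mpr ⟨Finset.mem_univ _, hTmem⟩⟩
        have hmq : Sum.inr ⟨i, T.min' hTne⟩ ∈ B.map g.toEmbedding :=
          (Finset.mem_filter.mp (T.min'_mem hTne)).2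
        have hminq : ∀ b : Fin (lam i),
            Sum.inr ⟨i, b⟩ ∈ B.map g.toEmbedding → T.min' hTne ≤ b := by
          intro b hb
          exact T.min'_le b (Finset.mem_filter.mpr ⟨Finset.mem_univ _, hb⟩)
        exact sun_ray_connected n lam i _ (T.min' hTne) (Finset.mem_coe.mpr hmq) hsub
          (fun b hb => hminq b (Finset.mem_coe.mp hb))
          (fun b hb d h1 h2 => Finset.mem_coe.mpr
            (hconvex i (T.min' hTne) b hmq (Finset.mem_coe.mp hb) d h1 h2))
  · rw [hQ, Finset.map_val, Multiset.map_map]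
    simpa only [Function.comp, Function.Embedding.coeFn_mk, Finset.card_map] using hPt
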